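/- Suppose α > 0 is a real number, m ∈ ℕ, and there exist real numbers ξ_0,...,ξ_m and ω_0,...,ω_m such that (1+e^x)^α = Σ_{k=0}^m e^{ξ_k x + ω_k} for all x ∈ ℝ. Then α is a natural number. -/

import Mathlib

open Real Finset

/-- If the relation holds with positive coefficients, no exponent can be negative. -/
lemma no_neg_exp {ι : Type*} (β : ℝ) (s : Finset ι) (c ξ : ι → ℝ)
    (hc : ∀ k ∈ s, 0 < c k)
    (h : ∀ x : ℝ, (1 + Real.exp x) ^ β = ∑ k ∈ s, c k * Real.exp (ξ k * x))
    (j : ι) (hj : j ∈ s) (hξ : ξ j < 0) : False := by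
  set M : ℝ := 1 + (2:ℝ) ^ β with hM
  have hM0 : 0 < M := by positivity
  have hcj := hc j hj
  set x : ℝ := min 0 (Real.log (M / c j) / ξ j) - 1 with hx
  have hx0 : x ≤ 0 := by
    have := min_le_left 0 (Real.log (M / c j) / ξ j); simp only [hx]; linarith
  have hx1 : x < Real.log (M / c j) / ξ j := by
    have := min_le_right 0 (Real.log (M / c j) / ξ j); simp only [hx]; linarith
  have hbase : (1:ℝ) ≤ 1 + Real.exp x := by linarith [Real.exp_pos x]
  have hbound : (1 + Real.exp x) ^ β ≤ M := by
    rcases le_or_gt 0 β with hβ | hβ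
    · have h2 : (1 + Real.exp x) ^ β ≤ (2:ℝ) ^ β := by
        apply Real.rpow_le_rpow (by positivity) _ hβ
        have := Real.exp_le_one_iff.mpr hx0; linarith
      linarith
    · have h2 : (1 + Real.exp x) ^ β ≤ 1 :=
        Real.rpow_le_one_of_one_le_of_nonpos hbase hβ.le
      have : (0:ℝ) < (2:ℝ) ^ β := Real.rpow_pos_of_pos two_pos β
      linarith
  have hterm : M < c j * Real.exp (ξ j * x) := by
    have hlog : Real.log (M / c j) < ξ j * x := by
      have h5 := (lt_div_iff_of_neg hξ).mp hx1
      have h6 : x * ξ j = ξ j * x := mul_comm _ _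
      linarith
    have : M / c j < Real.exp (ξ j * x) := by
      rw [← Real.exp_log (div_pos hM0 hcj)]
      exact Real.exp_lt_exp.mpr hlog
    calc M = c j * (M / c j) := by field_simp
    _ < c j * Real.exp (ξ j * x) := by exact (mul_lt_mul_iff_right₀ hcj).mpr this
  have hRHS : c j * Real.exp (ξ j * x) ≤ ∑ k ∈ s, c k * Real.exp (ξ k * x) :=
    Finset.single_le_sum (f := fun k => c k * Real.exp (ξ k * x))
      (fun k hk => by have := hc k hk; positivity) hj
  have := h x
  linarith

/-- No relation with negative power and nonempty positive sum. -/
lemma no_neg_pow {ι : Type*} (β : ℝ) (s : Finset ι) (c ξ : ι → ℝ)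
    (hβ : β < 0) (hs : s.Nonempty) (hc : ∀ k ∈ s, 0 < c k)
    (h : ∀ x : ℝ, (1 + Real.exp x) ^ β = ∑ k ∈ s, c k * Real.exp (ξ k * x)) : False := by
  obtain ⟨j, hj⟩ := hs
  have hcj := hc j hj
  have hξj : 0 ≤ ξ j := le_of_not_gt fun hneg => no_neg_exp β s c ξ hc h j hj hneg
  set x : ℝ := max 0 (Real.log (c j) / β) + 1 with hx
  have hx0 : 0 ≤ x := by
    have := le_max_left 0 (Real.log (c j) / β); simp only [hx]; linarith
  have hx1 : Real.log (c j) / β < x := by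
    have := le_max_right 0 (Real.log (c j) / β); simp only [hx]; linarith
  have h1 : (1 + Real.exp x) ^ β ≤ Real.exp (β * x) := by
    have h2 := Real.rpow_le_rpow_of_nonpos (Real.exp_pos x)
      (by linarith : Real.exp x ≤ 1 + Real.exp x) hβ.le
    rwa [Real.rpow_def_of_pos (Real.exp_pos x), Real.log_exp, mul_comm] at h2
  have h2 : Real.exp (β * x) < c j := by
    rw [← Real.exp_log hcj]
    apply Real.exp_lt_exp.mpr
    rw [div_lt_iff_of_neg hβ] at hx1
    linarith
  have h3 : c j ≤ c j * Real.exp (ξ j * x) := by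
    nlinarith [Real.one_le_exp (mul_nonneg hξj hx0)]
  have h4 : c j * Real.exp (ξ j * x) ≤ ∑ k ∈ s, c k * Real.exp (ξ k * x) :=
    Finset.single_le_sum (f := fun k => c k * Real.exp (ξ k * x))
      (fun k hk => by have := hc k hk; positivity) hj
  have := h x
  linarith

/-- For positive power some exponent is nonzero. -/
lemma exists_exp_ne_zero {ι : Type*} (β : ℝ) (s : Finset ι) (c ξ : ι → ℝ)
    (hβ : 0 < β)
    (h : ∀ x : ℝ, (1 + Real.exp x) ^ β = ∑ k ∈ s, c k * Real.exp (ξ k * x)) :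
    ∃ j ∈ s, ξ j ≠ 0 := by
  by_contra hall
  push_neg at hall
  have h0 : (2:ℝ) ^ β = ∑ k ∈ s, c k := by
    have := h 0
    norm_num at this
    exact this
  have h1 : (4:ℝ) ^ β = ∑ k ∈ s, c k := by
    have := h (Real.log 3)
    rw [Real.exp_log (by norm_num)] at this
    have e4 : (1:ℝ) + 3 = 4 := by norm_num
    rw [e4] at this
    rw [this]
    apply Finset.sum_congr rfl
    intro k hk
    rw [hall k hk]
    simp
  have : (2:ℝ) ^ β < 4 ^ β := Real.rpow_lt_rpow (by norm_num) (by norm_num) hβ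
  linarith

lemma main_induction : ∀ n : ℕ, ∀ (β : ℝ) {ι : Type} (s : Finset ι) (c ξ : ι → ℝ),
    0 < β → β ≤ n → (∀ k ∈ s, 0 < c k) →
    (∀ x : ℝ, (1 + Real.exp x) ^ β = ∑ k ∈ s, c k * Real.exp (ξ k * x)) →
    ∃ k : ℕ, β = k := by
  intro n
  induction n with
  | zero => intro β ι s c ξ hβ hβn _ _; norm_num at hβn; linarith
  | succ n ih =>
    intro β ι s c ξ hβ hβn hc h
    classical
    have hξnn : ∀ k ∈ s, 0 ≤ ξ k := fun k hk =>
      le_of_not_gt fun hlt => no_neg_exp β s c ξ hc h k hk hlt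
    -- derivative identity
    have hder : ∀ x : ℝ, β * (1 + Real.exp x) ^ (β - 1) * Real.exp x
        = ∑ k ∈ s, c k * (ξ k * Real.exp (ξ k * x)) := by
      intro x
      have h1 : HasDerivAt (fun y => (1 + Real.exp y) ^ β)
          (β * (1 + Real.exp x) ^ (β - 1) * Real.exp x) x := by
        have he : HasDerivAt (fun y => 1 + Real.exp y) (Real.exp x) x :=
          (Real.hasDerivAt_exp x).const_add 1
        have h3 := he.rpow_const (p := β) (Or.inl (by positivity))
        convert h3 using 1
        ring
      have h2 : HasDerivAt (fun y => ∑ k ∈ s, c k * Real.exp (ξ k * y))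
          (∑ k ∈ s, c k * (ξ k * Real.exp (ξ k * x))) x := by
        apply HasDerivAt.fun_sum
        intro k _
        have hk1 : HasDerivAt (fun y => Real.exp (ξ k * y)) (ξ k * Real.exp (ξ k * x)) x := by
          have := ((hasDerivAt_id x).const_mul (ξ k)).exp
          simpa [mul_comm] using this
        exact hk1.const_mul (c k)
      have h1' : HasDerivAt (fun y => ∑ k ∈ s, c k * Real.exp (ξ k * y))
          (β * (1 + Real.exp x) ^ (β - 1) * Real.exp x) x := by
        have heq : (fun y => (1 + Real.exp y) ^ β)
            = fun y => ∑ k ∈ s, c k * Real.exp (ξ k * y) := funext h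
        rwa [heq] at h1
      exact h1'.unique h2
    set t := s.filter (fun k => ξ k ≠ 0) with ht
    have hrel : ∀ x : ℝ, (1 + Real.exp x) ^ (β - 1)
        = ∑ k ∈ t, (c k * ξ k / β) * Real.exp ((ξ k - 1) * x) := by
      intro x
      have h0 := hder x
      have hexp : Real.exp x ≠ 0 := (Real.exp_pos x).ne'
      have hsum : ∑ k ∈ t, (c k * ξ k / β) * Real.exp ((ξ k - 1) * x)
          = ∑ k ∈ s, (c k * ξ k / β) * Real.exp ((ξ k - 1) * x) := by
        apply Finset.sum_filter_of_ne
        intro k _ hne hξ0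
        apply hne
        rw [hξ0]
        simp
      rw [hsum]
      have hcong : ∀ k ∈ s, (c k * ξ k / β) * Real.exp ((ξ k - 1) * x)
          = (c k * (ξ k * Real.exp (ξ k * x))) / (β * Real.exp x) := by
        intro k _
        rw [sub_mul, one_mul, Real.exp_sub]
        field_simp
      rw [Finset.sum_congr rfl hcong, ← Finset.sum_div, ← h0]
      field_simp
    obtain ⟨j, hjs, hjne⟩ := exists_exp_ne_zero β s c ξ hβ h
    have hjt : j ∈ t := Finset.mem_filter.mpr ⟨hjs, hjne⟩
    have htpos : ∀ k ∈ t, 0 < c k * ξ k / β := by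
      intro k hk
      rw [Finset.mem_filter] at hk
      have h1 := hξnn k hk.1
      have h2 : 0 < ξ k := lt_of_le_of_ne h1 (Ne.symm hk.2)
      have h3 := hc k hk.1
      positivity
    rcases lt_trichotomy β 1 with hlt | heq | hgt
    · exact absurd (no_neg_pow (β - 1) t _ _ (by linarith) ⟨j, hjt⟩ htpos hrel) not_false
    · exact ⟨1, by simp [heq]⟩
    · have hle : β - 1 ≤ n := by
        push_cast at hβn ⊢; linarith
      obtain ⟨k, hk⟩ := ih (β - 1) t _ _ (by linarith) hle htpos hrel
      exact ⟨k + 1, by push_cast; linarith⟩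

theorem rpow_sum_exp_imp_nat (α : ℝ) (hα : 0 < α) (m : ℕ) (ξ ω : Fin (m + 1) → ℝ)
    (h : ∀ x : ℝ, (1 + Real.exp x) ^ α = ∑ k, Real.exp (ξ k * x + ω k)) :
    ∃ n : ℕ, α = n := by
  apply main_induction ⌈α⌉₊ α Finset.univ (fun k => Real.exp (ω k)) ξ hα (Nat.le_ceil α)
    (fun k _ => Real.exp_pos _)
  intro x
  rw [h x]
  apply Finset.sum_congr rfl
  intro k _
  rw [Real.exp_add, mul_comm]
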